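/- Let K be a field of characteristic zero containing all roots of unity, V a K-vector space of finite positive dimension d, and φ : V × V → K a nondegenerate symmetric K-bilinear form that is anisotropic. Let B be a finite subgroup of PO(V,φ) = GO(V,φ)/(K*·1_V). Then B contains a normal subgroup A₁ such that: A₁ is an elementary abelian 2-group whose order divides 2^{d-1}, and the quotient B/A₁ is an elementary abelian 2-group. In particular, B is a finite 2-group and its second derived subgroup is trivial, i.e., [[B,B],[B,B]] = {1}. -/

import Mathlib

variable {K V : Type*} [Field K] [AddCommGroup V] [Module K V]

/-- The group of similitudes `GO(V,φ)`: the subgroup of the group of `K`-linear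
automorphisms of `V` consisting of those `u` for which there is `μ ∈ K*` with
`φ(ux,uy) = μ·φ(x,y)` for all `x,y ∈ V`. -/
def similitudeSubgroup (φ : LinearMap.BilinForm K V) : Subgroup (V ≃ₗ[K] V) where
  carrier := {u | ∃ μ : K, μ ≠ 0 ∧ ∀ x y : V, φ (u x) (u y) = μ * φ x y}
  one_mem' := ⟨1, one_ne_zero, fun x y => by rw [one_mul]; rfl⟩
  mul_mem' := by
    rintro u v ⟨μ, hμ, hu⟩ ⟨ν, hν, hv⟩
    refine ⟨μ * ν, mul_ne_zero hμ hν, fun x y => ?_⟩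
    have h : φ ((u * v) x) ((u * v) y) = φ (u (v x)) (u (v y)) := rfl
    rw [h, hu, hv]; ring
  inv_mem' := by
    rintro u ⟨μ, hμ, hu⟩
    refine ⟨μ⁻¹, inv_ne_zero hμ, fun x y => ?_⟩
    have h := hu ((u⁻¹ : V ≃ₗ[K] V) x) ((u⁻¹ : V ≃ₗ[K] V) y)
    rw [show u ((u⁻¹ : V ≃ₗ[K] V) x) = x from u.apply_symm_apply x,
      show u ((u⁻¹ : V ≃ₗ[K] V) y) = y from u.apply_symm_apply y] at h
    rw [h, inv_mul_cancel_left₀ hμ]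

/-- The central subgroup `K*·1_V` of `GO(V,φ)` consisting of the nonzero scalar
automorphisms. -/
def scalarSubgroup (φ : LinearMap.BilinForm K V) : Subgroup (similitudeSubgroup φ) where
  carrier := {u | ∃ c : K, c ≠ 0 ∧ ∀ x : V, (u : V ≃ₗ[K] V) x = c • x}
  one_mem' := ⟨1, one_ne_zero, fun x => by simp⟩
  mul_mem' := by
    rintro u v ⟨c, hc, hcu⟩ ⟨d, hd, hdv⟩
    refine ⟨c * d, mul_ne_zero hc hd, fun x => ?_⟩
    have h : ((u * v : similitudeSubgroup φ) : V ≃ₗ[K] V) x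
        = (u : V ≃ₗ[K] V) ((v : V ≃ₗ[K] V) x) := rfl
    rw [h, hdv, map_smul, hcu, smul_smul, mul_comm]
  inv_mem' := by
    rintro u ⟨c, hc, hcu⟩
    refine ⟨c⁻¹, inv_ne_zero hc, fun x => ?_⟩
    apply (u : V ≃ₗ[K] V).injective
    rw [show ((u⁻¹ : similitudeSubgroup φ) : V ≃ₗ[K] V) x = (u : V ≃ₗ[K] V).symm x from rfl,
      (u : V ≃ₗ[K] V).apply_symm_apply, map_smul, hcu, smul_smul, inv_mul_cancel₀ hc, one_smul]

instance scalarSubgroup_normal (φ : LinearMap.BilinForm K V) : (scalarSubgroup φ).Normal := by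
  constructor
  rintro n ⟨c, hc, hn⟩ g
  refine ⟨c, hc, fun x => ?_⟩
  have h1 : ((g * n * g⁻¹ : similitudeSubgroup φ) : V ≃ₗ[K] V) x
      = (g : V ≃ₗ[K] V) ((n : V ≃ₗ[K] V) ((g : V ≃ₗ[K] V).symm x)) := rfl
  rw [h1, hn, map_smul, (g : V ≃ₗ[K] V).apply_symm_apply]

/-- The projective orthogonal group `PO(V,φ) = GO(V,φ)/(K*·1_V)`. -/
abbrev projOrthogonalGroup (φ : LinearMap.BilinForm K V) :=
  similitudeSubgroup φ ⧸ scalarSubgroup φ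

universe u

private lemma invol_of_pow_eq_one {K V : Type*} [Field K] [CharZero K] [AddCommGroup V] [Module K V]
    (φ : LinearMap.BilinForm K V)
    (haniso : ∀ v : V, v ≠ 0 → φ v v ≠ 0)
    (u : V ≃ₗ[K] V) (hiso : ∀ x y : V, φ (u x) (u y) = φ x y)
    {n : ℕ} (hn : 0 < n) {ζ : K} (hζ : IsPrimitiveRoot ζ n) (hun : u ^ n = 1) :
    u * u = 1 := by
  have hζ0 : ζ ≠ 0 := hζ.ne_zero hn.ne'
  set w : K := ζ⁻¹ with hw
  have hwprim : IsPrimitiveRoot w n := hζ.inv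
  have hwn : w ^ n = 1 := hwprim.pow_eq_one
  have hzw : ∀ j : ℕ, ζ ^ j * w ^ j = 1 := by
    intro j; rw [← mul_pow, mul_inv_cancel₀ hζ0, one_pow]
  refine LinearEquiv.ext fun x => ?_
  show u (u x) = x
  set z : ℕ → V := fun j => ∑ k ∈ Finset.range n, w ^ (j * k) • (u ^ k) x with hz
  have hun' : ∀ y : V, (u ^ n) y = y := fun y => by rw [hun]; rfl
  have key : ∀ j : ℕ, u (z j) = ζ ^ j • z j := by
    intro j
    set g : ℕ → V := fun k => w ^ (j * k) • (u ^ k) x with hg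
    have hgshift : ∑ k ∈ Finset.range n, g (k + 1) = z j := by
      have hgn : g n = g 0 := by
        have h1 : w ^ (j * n) = 1 := by rw [pow_mul', hwn, one_pow]
        simp [hg, h1, hun']
      have e1 := Finset.sum_range_succ' g n
      have e2 := Finset.sum_range_succ g n
      have e3 : ∑ k ∈ Finset.range n, g (k + 1) + g 0 = ∑ k ∈ Finset.range n, g k + g n := by
        rw [← e1, e2]
      rw [hgn] at e3
      exact add_right_cancel e3
    have h1 : u (z j) = ∑ k ∈ Finset.range n, w ^ (j * k) • (u ^ (k + 1)) x := by
      rw [hz]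
      simp only [map_sum, map_smul]
      refine Finset.sum_congr rfl fun k _ => ?_
      congr 1
      rw [pow_succ']; rfl
    have h2 : ∀ k : ℕ, w ^ (j * k) • (u ^ (k + 1)) x = ζ ^ j • g (k + 1) := by
      intro k
      simp only [hg, smul_smul]
      congr 1
      have : j * (k + 1) = j * k + j := by ring
      rw [this, pow_add]
      calc w ^ (j*k) = (ζ ^ j * w ^ j) * w ^ (j*k) := by rw [hzw, one_mul]
        _ = ζ ^ j * (w ^ (j * k) * w ^ j) := by ring
    rw [h1]
    calc ∑ k ∈ Finset.range n, w ^ (j * k) • (u ^ (k + 1)) x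
        = ∑ k ∈ Finset.range n, ζ ^ j • g (k + 1) := Finset.sum_congr rfl fun k _ => h2 k
      _ = ζ ^ j • ∑ k ∈ Finset.range n, g (k + 1) := (Finset.smul_sum).symm
      _ = ζ ^ j • z j := by rw [hgshift]
  have hb : ∑ j ∈ Finset.range n, z j = (n : K) • x := by
    rw [hz]
    rw [Finset.sum_comm]
    have hterm : ∀ k ∈ Finset.range n,
        ∑ j ∈ Finset.range n, w ^ (j * k) • (u ^ k) x
          = if k = 0 then (n : K) • x else 0 := by
      intro k hk
      have : ∑ j ∈ Finset.range n, w ^ (j * k) • (u ^ k) x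
          = (∑ j ∈ Finset.range n, (w ^ k) ^ j) • (u ^ k) x := by
        rw [Finset.sum_smul]
        refine Finset.sum_congr rfl fun j _ => ?_
        rw [← pow_mul']
      rw [this]
      by_cases hk0 : k = 0
      · subst hk0
        simp
      · have hklt := Finset.mem_range.mp hk
        have hwk : w ^ k ≠ 1 :=
          hwprim.pow_ne_one_of_pos_of_lt hk0 hklt
        have : ∑ j ∈ Finset.range n, (w ^ k) ^ j = 0 := by
          rw [geom_sum_eq hwk]
          have : (w ^ k) ^ n = 1 := by rw [← pow_mul, mul_comm, pow_mul, hwn, one_pow]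
          rw [this, sub_self, zero_div]
        rw [this, zero_smul, if_neg hk0]
    rw [Finset.sum_congr rfl hterm, Finset.sum_ite_eq' (Finset.range n) 0 (fun _ => (n : K) • x)]
    rw [if_pos (Finset.mem_range.mpr hn)]
  have hd : ∀ j : ℕ, u (u (z j)) = z j := by
    intro j
    rw [key j, map_smul, key j, smul_smul]
    by_cases hcc : ζ ^ j * ζ ^ j = 1
    · rw [hcc, one_smul]
    · have hz0 : z j = 0 := by
        by_contra hz0
        have h := hiso (z j) (z j)
        rw [key j] at h
        simp only [map_smul, LinearMap.smul_apply, smul_eq_mul] at h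
        apply hcc
        have hφ := haniso _ hz0
        have h2 : (ζ ^ j * ζ ^ j - 1) * φ (z j) (z j) = 0 := by linear_combination h
        rcases mul_eq_zero.mp h2 with h3 | h3
        · exact sub_eq_zero.mp h3
        · exact absurd h3 hφ
      rw [hz0, smul_zero]
  have hfin : (n : K) • u (u x) = (n : K) • x := by
    calc (n : K) • u (u x) = u (u ((n : K) • x)) := by rw [map_smul, map_smul]
      _ = u (u (∑ j ∈ Finset.range n, z j)) := by rw [hb]
      _ = ∑ j ∈ Finset.range n, u (u (z j)) := by rw [map_sum, map_sum]
      _ = ∑ j ∈ Finset.range n, z j := Finset.sum_congr rfl fun j _ => hd j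
      _ = (n : K) • x := hb
  exact smul_right_injective V (Nat.cast_ne_zero.mpr hn.ne' : (n : K) ≠ 0) hfin



private lemma card_dvd_two_pow_of_invol {K : Type*} [Field K] [CharZero K] :
    ∀ (n : ℕ) (V : Type u) (_ : AddCommGroup V) (_ : Module K V) (_ : FiniteDimensional K V),
      Module.finrank K V = n → ∀ G : Subgroup (V ≃ₗ[K] V), Finite G →
      (∀ u ∈ G, u * u = 1) → Nat.card G ∣ 2 ^ n := by
  intro n
  induction n using Nat.strong_induction_on with
  | _ n IH =>
    intro V _ _ _ hrank G hGfin hsq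
    rcases Nat.eq_zero_or_pos n with hn0 | hnpos
    · subst hn0
      haveI hsub : Subsingleton V := by
        have := hrank
        rw [Module.finrank_zero_iff (R := K)] at this
        exact this
      have hG : G = ⊥ := by
        rw [eq_bot_iff]
        intro g _
        rw [Subgroup.mem_bot]
        exact LinearEquiv.ext fun x => Subsingleton.elim _ _
      rw [hG, pow_zero]
      simp
    · by_cases hall : ∀ g ∈ G, g = 1 ∨ g = (LinearEquiv.neg K : V ≃ₗ[K] V)
      · have hle : G ≤ Subgroup.zpowers (LinearEquiv.neg K : V ≃ₗ[K] V) := by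
          intro g hg
          rcases hall g hg with h | h
          · rw [h]; exact Subgroup.one_mem _
          · rw [h]; exact Subgroup.mem_zpowers _
        have h2 : Nat.card G ∣ orderOf (LinearEquiv.neg K : V ≃ₗ[K] V) := by
          rw [← Nat.card_zpowers]; exact Subgroup.card_dvd_of_le hle
        have hneg2 : (LinearEquiv.neg K : V ≃ₗ[K] V) ^ 2 = 1 := by
          rw [pow_two]
          exact LinearEquiv.ext fun x => neg_neg x
        exact (h2.trans (orderOf_dvd_of_pow_eq_one hneg2)).trans
          (pow_dvd_pow 2 hnpos)
      · push_neg at hall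
        obtain ⟨u, huG, hu1, hune⟩ := hall
        have hcomm : ∀ g ∈ G, ∀ h ∈ G, g * h = h * g := by
          intro g hg h hh
          calc g * h = (g * h)⁻¹ := (inv_eq_of_mul_eq_one_right (hsq _ (G.mul_mem hg hh))).symm
            _ = h⁻¹ * g⁻¹ := mul_inv_rev g h
            _ = h * g := by
                rw [inv_eq_of_mul_eq_one_right (hsq g hg), inv_eq_of_mul_eq_one_right (hsq h hh)]
        have huu : ∀ x : V, u (u x) = x := fun x => by
          have h := hsq u huG
          exact DFunLike.congr_fun h x
        have h2K : (2 : K) ≠ 0 := two_ne_zero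
        let p : Submodule K V :=
          { carrier := {x | u x = x}
            add_mem' := fun {a b} ha hb => by
              simp only [Set.mem_setOf_eq, map_add] at *; rw [ha, hb]
            zero_mem' := map_zero u
            smul_mem' := fun c x hx => by
              simp only [Set.mem_setOf_eq, map_smul] at *; rw [hx] }
        let q : Submodule K V :=
          { carrier := {x | u x = -x}
            add_mem' := fun {a b} ha hb => by
              simp only [Set.mem_setOf_eq, map_add] at *; rw [ha, hb, neg_add]
            zero_mem' := by simp only [Set.mem_setOf_eq, map_zero, neg_zero]
            smul_mem' := fun c x hx => by
              simp only [Set.mem_setOf_eq, map_smul] at *; rw [hx, smul_neg] }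
        have hmemp : ∀ x : V, x ∈ p ↔ u x = x := fun _ => Iff.rfl
        have hmemq : ∀ x : V, x ∈ q ↔ u x = -x := fun _ => Iff.rfl
        have hcompl : IsCompl p q := by
          constructor
          · rw [disjoint_iff_inf_le]
            intro x hx
            obtain ⟨hxp, hxq⟩ := Submodule.mem_inf.mp hx
            have hxp' : u x = x := hxp
            have hxq' : u x = -x := hxq
            have hxe : x = -x := by rw [hxp'] at hxq'; exact hxq'
            have h2x : (2 : K) • x = 0 := by
              rw [two_smul]
              nth_rewrite 1 [hxe]
              exact neg_add_cancel x
            rw [Submodule.mem_bot]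
            exact (smul_eq_zero.mp h2x).resolve_left h2K
          · rw [codisjoint_iff, eq_top_iff]
            intro x _
            have hdecomp : x = (2 : K)⁻¹ • (x + u x) + (2 : K)⁻¹ • (x - u x) := by
              rw [← smul_add]
              have h3 : x + u x + (x - u x) = (2 : K) • x := by rw [two_smul]; abel
              rw [h3, smul_smul, inv_mul_cancel₀ h2K, one_smul]
            rw [hdecomp]
            refine Submodule.add_mem_sup ?_ ?_
            · show u ((2:K)⁻¹ • (x + u x)) = (2:K)⁻¹ • (x + u x)
              rw [map_smul, map_add, huu]
              congr 1
              exact add_comm _ _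
            · show u ((2:K)⁻¹ • (x - u x)) = -((2:K)⁻¹ • (x - u x))
              rw [map_smul, map_sub, huu, ← smul_neg]
              congr 1
              abel
        have hqne : q ≠ ⊥ := by
          obtain ⟨x, hx⟩ : ∃ x : V, u x ≠ x := by
            by_contra h; push_neg at h; exact hu1 (LinearEquiv.ext h)
          intro hbot
          have hmem : x - u x ∈ q := by
            show u (x - u x) = -(x - u x)
            rw [map_sub, huu]; abel
          rw [hbot, Submodule.mem_bot, sub_eq_zero] at hmem
          exact hx hmem.symm
        have hpne : p ≠ ⊥ := by
          obtain ⟨x, hx⟩ : ∃ x : V, u x ≠ -x := by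
            by_contra h; push_neg at h
            exact hune (LinearEquiv.ext fun y => by rw [h y]; rfl)
          intro hbot
          have hmem : x + u x ∈ p := by
            show u (x + u x) = x + u x
            rw [map_add, huu]
            exact add_comm _ _
          rw [hbot, Submodule.mem_bot] at hmem
          exact hx (eq_neg_of_add_eq_zero_right hmem)
        -- dimensions
        have hsumrank : Module.finrank K p + Module.finrank K q = n := by
          rw [Submodule.finrank_add_eq_of_isCompl hcompl, hrank]
        have hppos : 0 < Module.finrank K p :=
          Nat.pos_of_ne_zero fun h => hpne (Submodule.finrank_eq_zero.mp h)
        have hqpos : 0 < Module.finrank K q :=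
          Nat.pos_of_ne_zero fun h => hqne (Submodule.finrank_eq_zero.mp h)
        have hplt : Module.finrank K p < n := by omega
        have hqlt : Module.finrank K q < n := by omega
        -- commuting with u and invariance
        have hgu : ∀ g ∈ G, ∀ x : V, u (g x) = g (u x) := by
          intro g hg x
          have h := hcomm g hg u huG
          exact (DFunLike.congr_fun h x).symm
        have hgg : ∀ g ∈ G, ∀ x : V, g (g x) = x := by
          intro g hg x
          exact DFunLike.congr_fun (hsq g hg) x
        have hmapp : ∀ g : G, p.map ((g : V ≃ₗ[K] V) : V →ₗ[K] V) = p := by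
          intro g
          ext y
          simp only [Submodule.mem_map]
          constructor
          · rintro ⟨x, hx, rfl⟩
            show u ((g : V ≃ₗ[K] V) x) = (g : V ≃ₗ[K] V) x
            rw [hgu g g.2, (hmemp x).mp hx]
          · intro hy
            refine ⟨(g : V ≃ₗ[K] V) y, ?_, hgg g g.2 y⟩
            show u ((g : V ≃ₗ[K] V) y) = (g : V ≃ₗ[K] V) y
            rw [hgu g g.2, (hmemp y).mp hy]
        have hmapq : ∀ g : G, q.map ((g : V ≃ₗ[K] V) : V →ₗ[K] V) = q := by
          intro g
          ext y
          simp only [Submodule.mem_map]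
          constructor
          · rintro ⟨x, hx, rfl⟩
            show u ((g : V ≃ₗ[K] V) x) = -((g : V ≃ₗ[K] V) x)
            rw [hgu g g.2, (hmemq x).mp hx, map_neg]
          · intro hy
            refine ⟨(g : V ≃ₗ[K] V) y, ?_, hgg g g.2 y⟩
            show u ((g : V ≃ₗ[K] V) y) = -((g : V ≃ₗ[K] V) y)
            rw [hgu g g.2, (hmemq y).mp hy, map_neg]
        let ρ : G →* (p ≃ₗ[K] p) × (q ≃ₗ[K] q) :=
          { toFun := fun g =>
              ((g : V ≃ₗ[K] V).ofSubmodules p p (hmapp g),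
               (g : V ≃ₗ[K] V).ofSubmodules q q (hmapq g))
            map_one' := by
              refine Prod.ext ?_ ?_ <;>
                · refine LinearEquiv.ext fun x => Subtype.ext ?_
                  rfl
            map_mul' := fun g h => by
              refine Prod.ext ?_ ?_ <;>
                · refine LinearEquiv.ext fun x => Subtype.ext ?_
                  rfl }
        have hinj : Function.Injective ρ := by
          refine (injective_iff_map_eq_one ρ).mpr fun g hg => ?_
          have h1 : ∀ x : V, x ∈ p → (g : V ≃ₗ[K] V) x = x := by
            intro x hx
            have h2 := DFunLike.congr_fun (congrArg Prod.fst hg) ⟨x, hx⟩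
            exact congrArg Subtype.val h2
          have h2 : ∀ x : V, x ∈ q → (g : V ≃ₗ[K] V) x = x := by
            intro x hx
            have h2 := DFunLike.congr_fun (congrArg Prod.snd hg) ⟨x, hx⟩
            exact congrArg Subtype.val h2
          refine Subtype.ext (LinearEquiv.ext fun x => ?_)
          have hxmem : x ∈ p ⊔ q := by
            rw [hcompl.sup_eq_top]; trivial
          obtain ⟨a, ha, b, hb, rfl⟩ := Submodule.mem_sup.mp hxmem
          show (g : V ≃ₗ[K] V) (a + b) = a + b
          rw [map_add, h1 a ha, h2 b hb]
        have hcard1 : Nat.card G = Nat.card ρ.range :=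
          Nat.card_congr (MonoidHom.ofInjective hinj).toEquiv
        let G₁ : Subgroup (p ≃ₗ[K] p) := ρ.range.map (MonoidHom.fst _ _)
        let G₂ : Subgroup (q ≃ₗ[K] q) := ρ.range.map (MonoidHom.snd _ _)
        haveI hfinr : Finite ρ.range := Set.Finite.to_subtype (by
          rw [MonoidHom.coe_range]; exact Set.finite_range ρ)
        haveI hfin1 : Finite G₁ := Set.Finite.to_subtype (by
          rw [Subgroup.coe_map]
          exact Set.Finite.image _ (by rw [MonoidHom.coe_range]; exact Set.finite_range ρ))
        haveI hfin2 : Finite G₂ := Set.Finite.to_subtype (by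
          rw [Subgroup.coe_map]
          exact Set.Finite.image _ (by rw [MonoidHom.coe_range]; exact Set.finite_range ρ))
        have hle : ρ.range ≤ G₁.prod G₂ := by
          rintro ⟨a, b⟩ hab
          exact Subgroup.mem_prod.mpr ⟨⟨(a, b), hab, rfl⟩, ⟨(a, b), hab, rfl⟩⟩
        have hdvd0 : Nat.card ρ.range ∣ Nat.card (G₁.prod G₂) := Subgroup.card_dvd_of_le hle
        have hcardprod : Nat.card (G₁.prod G₂) = Nat.card G₁ * Nat.card G₂ := by
          rw [Nat.card_congr (Subgroup.prodEquiv G₁ G₂).toEquiv, Nat.card_prod]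
        have hsq1 : ∀ a ∈ G₁, a * a = 1 := by
          rintro a ⟨pr, ⟨g, rfl⟩, rfl⟩
          have hgone : g * g = 1 := Subtype.ext (hsq (g : V ≃ₗ[K] V) g.2)
          have : ρ g * ρ g = 1 := by rw [← map_mul, hgone, map_one]
          exact congrArg Prod.fst this
        have hsq2 : ∀ a ∈ G₂, a * a = 1 := by
          rintro a ⟨pr, ⟨g, rfl⟩, rfl⟩
          have hgone : g * g = 1 := Subtype.ext (hsq (g : V ≃ₗ[K] V) g.2)
          have : ρ g * ρ g = 1 := by rw [← map_mul, hgone, map_one]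
          exact congrArg Prod.snd this
        have hd1 : Nat.card G₁ ∣ 2 ^ Module.finrank K p :=
          IH _ hplt p inferInstance inferInstance inferInstance rfl G₁ hfin1 hsq1
        have hd2 : Nat.card G₂ ∣ 2 ^ Module.finrank K q :=
          IH _ hqlt q inferInstance inferInstance inferInstance rfl G₂ hfin2 hsq2
        calc Nat.card G = Nat.card ρ.range := hcard1
          _ ∣ Nat.card (G₁.prod G₂) := hdvd0
          _ = Nat.card G₁ * Nat.card G₂ := hcardprod
          _ ∣ 2 ^ Module.finrank K p * 2 ^ Module.finrank K q := mul_dvd_mul hd1 hd2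
          _ = 2 ^ n := by rw [← pow_add, hsumrank]

section MuPlumbing

variable {K V : Type*} [Field K] [AddCommGroup V] [Module K V]

private def scalarSim (φ : LinearMap.BilinForm K V) (c : K) (hc : c ≠ 0) :
    similitudeSubgroup φ :=
  ⟨LinearEquiv.smulOfNeZero K V c hc, c * c, mul_ne_zero hc hc, fun x y => by
    show φ (c • x) (c • y) = c * c * φ x y
    simp only [map_smul, LinearMap.smul_apply, smul_eq_mul]
    ring⟩

private lemma scalarSim_mem (φ : LinearMap.BilinForm K V) (c : K) (hc : c ≠ 0) :
    scalarSim φ c hc ∈ scalarSubgroup φ :=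
  ⟨c, hc, fun _ => rfl⟩

private lemma scalarSim_apply (φ : LinearMap.BilinForm K V) (c : K) (hc : c ≠ 0) (x : V) :
    ((scalarSim φ c hc : similitudeSubgroup φ) : V ≃ₗ[K] V) x = c • x := rfl

private lemma simil_spec (φ : LinearMap.BilinForm K V) (u : similitudeSubgroup φ) :
    ∃ μ : K, μ ≠ 0 ∧ ∀ x y : V,
      φ ((u : V ≃ₗ[K] V) x) ((u : V ≃ₗ[K] V) y) = μ * φ x y := u.2

private noncomputable def mu (φ : LinearMap.BilinForm K V) (u : similitudeSubgroup φ) : K :=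
  (simil_spec φ u).choose

private lemma mu_ne (φ : LinearMap.BilinForm K V) (u : similitudeSubgroup φ) : mu φ u ≠ 0 :=
  (simil_spec φ u).choose_spec.1

private lemma mu_spec (φ : LinearMap.BilinForm K V) (u : similitudeSubgroup φ) :
    ∀ x y : V, φ ((u : V ≃ₗ[K] V) x) ((u : V ≃ₗ[K] V) y) = mu φ u * φ x y :=
  (simil_spec φ u).choose_spec.2

private lemma mu_unique (φ : LinearMap.BilinForm K V) {v₀ : V} (hv₀ : φ v₀ v₀ ≠ 0)
    (u : similitudeSubgroup φ) {ν : K}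
    (hν : ∀ x y : V, φ ((u : V ≃ₗ[K] V) x) ((u : V ≃ₗ[K] V) y) = ν * φ x y) :
    ν = mu φ u :=
  mul_right_cancel₀ hv₀ ((hν v₀ v₀).symm.trans (mu_spec φ u v₀ v₀))

private noncomputable def muHom (φ : LinearMap.BilinForm K V) {v₀ : V} (hv₀ : φ v₀ v₀ ≠ 0) :
    similitudeSubgroup φ →* Kˣ where
  toFun u := Units.mk0 (mu φ u) (mu_ne φ u)
  map_one' := by
    refine Units.ext ?_
    show mu φ 1 = 1
    exact (mu_unique φ hv₀ 1 (fun x y => by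
      show φ x y = 1 * φ x y
      rw [one_mul])).symm
  map_mul' u v := by
    refine Units.ext ?_
    show mu φ (u * v) = mu φ u * mu φ v
    refine (mu_unique φ hv₀ (u * v) fun x y => ?_).symm
    show φ ((u : V ≃ₗ[K] V) ((v : V ≃ₗ[K] V) x)) ((u : V ≃ₗ[K] V) ((v : V ≃ₗ[K] V) y))
        = mu φ u * mu φ v * φ x y
    rw [mu_spec φ u, mu_spec φ v]
    ring

private lemma sq_quot {K : Type*} [Field K]
    (z : Kˣ ⧸ (powMonoidHom 2 : Kˣ →* Kˣ).range) : z * z = 1 := by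
  induction z using QuotientGroup.induction_on with
  | _ a =>
    rw [← QuotientGroup.mk_mul, QuotientGroup.eq_one_iff]
    exact ⟨a, by rw [powMonoidHom_apply, pow_two]⟩

private noncomputable def projMu (φ : LinearMap.BilinForm K V) {v₀ : V} (hv₀ : φ v₀ v₀ ≠ 0) :
    projOrthogonalGroup φ →* Kˣ ⧸ (powMonoidHom 2 : Kˣ →* Kˣ).range :=
  QuotientGroup.lift (scalarSubgroup φ) ((QuotientGroup.mk' _).comp (muHom φ hv₀)) (by
    rintro s ⟨c, hc, hs⟩
    show (QuotientGroup.mk (muHom φ hv₀ s) : Kˣ ⧸ (powMonoidHom 2 : Kˣ →* Kˣ).range) = 1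
    rw [QuotientGroup.eq_one_iff]
    refine ⟨Units.mk0 c hc, Units.ext ?_⟩
    show c ^ 2 = mu φ s
    rw [pow_two]
    exact mu_unique φ hv₀ s fun x y => by
      rw [hs x, hs y]
      simp only [map_smul, LinearMap.smul_apply, smul_eq_mul]
      ring)

private lemma projMu_mk (φ : LinearMap.BilinForm K V) {v₀ : V} (hv₀ : φ v₀ v₀ ≠ 0)
    (u : similitudeSubgroup φ) :
    projMu φ hv₀ (QuotientGroup.mk u) = QuotientGroup.mk (muHom φ hv₀ u) := rfl

private def isomSubgroup (φ : LinearMap.BilinForm K V) : Subgroup (similitudeSubgroup φ) where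
  carrier := {u | ∀ x y : V, φ ((u : V ≃ₗ[K] V) x) ((u : V ≃ₗ[K] V) y) = φ x y}
  one_mem' := fun _ _ => rfl
  mul_mem' := by
    rintro u v hu hv x y
    show φ ((u : V ≃ₗ[K] V) ((v : V ≃ₗ[K] V) x)) ((u : V ≃ₗ[K] V) ((v : V ≃ₗ[K] V) y)) = φ x y
    rw [hu, hv]
  inv_mem' := by
    intro u hu x y
    have h := hu (((u⁻¹ : similitudeSubgroup φ) : V ≃ₗ[K] V) x)
      (((u⁻¹ : similitudeSubgroup φ) : V ≃ₗ[K] V) y)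
    rw [show (u : V ≃ₗ[K] V) (((u⁻¹ : similitudeSubgroup φ) : V ≃ₗ[K] V) x) = x from
        (u : V ≃ₗ[K] V).apply_symm_apply x,
      show (u : V ≃ₗ[K] V) (((u⁻¹ : similitudeSubgroup φ) : V ≃ₗ[K] V) y) = y from
        (u : V ≃ₗ[K] V).apply_symm_apply y] at h
    exact h.symm

end MuPlumbing

open scoped commutatorElement

/-- Let `K` be a field of characteristic zero containing all roots of
unity, `V` a `K`-vector space of finite positive dimension `d`, and `φ` a nondegenerate
symmetric anisotropic `K`-bilinear form on `V`. Let `B` be a finite subgroup of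
`PO(V,φ) = GO(V,φ)/(K*·1_V)`. Then `B` contains a normal subgroup `A₁` such that `A₁` is
an elementary abelian `2`-group whose order divides `2 ^ (d-1)`, and the quotient `B/A₁`
is an elementary abelian `2`-group (i.e. all commutators and all squares of elements of
`B` lie in `A₁`). In particular, `B` is a finite `2`-group and its second derived
subgroup is trivial: `[[B,B],[B,B]] = {1}`. -/
theorem stmt7 {K V : Type*} [Field K] [CharZero K] [AddCommGroup V] [Module K V]
    [FiniteDimensional K V] (hdim : 0 < Module.finrank K V)
    (hroots : ∀ n : ℕ, 0 < n → ∃ ζ : K, IsPrimitiveRoot ζ n)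
    (φ : LinearMap.BilinForm K V)
    (hsymm : ∀ x y : V, φ x y = φ y x)
    (hnondeg : ∀ x : V, (∀ y : V, φ x y = 0) → x = 0)
    (haniso : ∀ v : V, v ≠ 0 → φ v v ≠ 0)
    (B : Subgroup (projOrthogonalGroup φ)) (hBfin : Finite B) :
    (∃ A : Subgroup B, A.Normal ∧
      (∀ a ∈ A, ∀ b ∈ A, a * b = b * a) ∧ (∀ a ∈ A, a ^ 2 = 1) ∧
      Nat.card A ∣ 2 ^ (Module.finrank K V - 1) ∧
      (∀ x y : B, ⁅x, y⁆ ∈ A) ∧ (∀ x : B, x ^ 2 ∈ A)) ∧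
    (∃ k : ℕ, Nat.card B = 2 ^ k) ∧ derivedSeries B 2 = ⊥ := by
  classical
  haveI := hBfin
  haveI : Nontrivial V := by
    rcases Module.finrank_pos_iff (R := K) (M := V) |>.mp hdim with h
    exact h
  obtain ⟨v₀, hv₀ne⟩ := exists_ne (0 : V)
  have hv₀ : φ v₀ v₀ ≠ 0 := haniso v₀ hv₀ne
  set d := Module.finrank K V with hd
  let F : projOrthogonalGroup φ →* Kˣ ⧸ (powMonoidHom 2 : Kˣ →* Kˣ).range := projMu φ hv₀
  let Gm : B →* Kˣ ⧸ (powMonoidHom 2 : Kˣ →* Kˣ).range := F.comp B.subtype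
  -- every finite-order isometry whose class is of finite order is an involution
  have hcoe_pow : ∀ (w : similitudeSubgroup φ) (k : ℕ),
      ((w ^ k : similitudeSubgroup φ) : V ≃ₗ[K] V) = (w : V ≃ₗ[K] V) ^ k :=
    fun w k => SubmonoidClass.coe_pow w k
  have hQ : ∀ u : similitudeSubgroup φ, u ∈ isomSubgroup φ →
      IsOfFinOrder (QuotientGroup.mk u : projOrthogonalGroup φ) →
      (u : V ≃ₗ[K] V) * (u : V ≃ₗ[K] V) = 1 := by
    intro u hu hfin
    set m := orderOf (QuotientGroup.mk u : projOrthogonalGroup φ) with hm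
    have hmpos : 0 < m := hfin.orderOf_pos
    have hum : u ^ m ∈ scalarSubgroup φ := by
      rw [← QuotientGroup.eq_one_iff, QuotientGroup.mk_pow]
      exact pow_orderOf_eq_one _
    obtain ⟨c, hc, hcs⟩ := hum
    have hpow : ∀ (k : ℕ) (x y : V),
        φ (((u : V ≃ₗ[K] V) ^ k) x) (((u : V ≃ₗ[K] V) ^ k) y) = φ x y := by
      intro k
      induction k with
      | zero => intro x y; rfl
      | succ k ih =>
        intro x y
        rw [pow_succ']
        show φ ((u : V ≃ₗ[K] V) (((u : V ≃ₗ[K] V) ^ k) x))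
          ((u : V ≃ₗ[K] V) (((u : V ≃ₗ[K] V) ^ k) y)) = φ x y
        rw [hu, ih]
    have hcm : ∀ x : V, ((u : V ≃ₗ[K] V) ^ m) x = c • x := by
      intro x
      rw [← hcoe_pow u m]
      exact hcs x
    have hc2 : c * c = 1 := by
      have h1 := hpow m v₀ v₀
      rw [hcm v₀] at h1
      simp only [map_smul, LinearMap.smul_apply, smul_eq_mul, ← mul_assoc] at h1
      have h2 : c * c * φ v₀ v₀ = 1 * φ v₀ v₀ := by rw [one_mul]; exact h1
      exact mul_right_cancel₀ hv₀ h2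
    have hu2m : (u : V ≃ₗ[K] V) ^ (2 * m) = 1 := by
      refine LinearEquiv.ext fun x => ?_
      have h1 : ((u : V ≃ₗ[K] V) ^ (2 * m)) x
          = ((u : V ≃ₗ[K] V) ^ m) (((u : V ≃ₗ[K] V) ^ m) x) := by
        rw [two_mul, pow_add]; rfl
      rw [h1, hcm, hcm, smul_smul, hc2, one_smul]
      rfl
    obtain ⟨ζ, hζ⟩ := hroots (2 * m) (by omega)
    exact invol_of_pow_eq_one φ haniso _ hu (by omega) hζ hu2m
  -- lifting elements with square similitude factor to isometries
  have hP : ∀ g : projOrthogonalGroup φ, IsOfFinOrder g → F g = 1 →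
      ∃ u : similitudeSubgroup φ, u ∈ isomSubgroup φ ∧
        (QuotientGroup.mk u : projOrthogonalGroup φ) = g := by
    intro g hg hFg
    obtain ⟨w, rfl⟩ := QuotientGroup.mk_surjective g
    have h1 : (QuotientGroup.mk (muHom φ hv₀ w) : Kˣ ⧸ (powMonoidHom 2 : Kˣ →* Kˣ).range)
        = 1 := hFg
    rw [QuotientGroup.eq_one_iff] at h1
    obtain ⟨c, hc⟩ := h1
    have hcmu : (c : K) * (c : K) = mu φ w := by
      have h2 := congrArg Units.val hc
      rw [powMonoidHom_apply] at h2
      rw [← pow_two]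
      exact h2
    set s : similitudeSubgroup φ := scalarSim φ ((c : K)⁻¹) (inv_ne_zero c.ne_zero) with hs
    have hsw : ∀ x : V, ((s * w : similitudeSubgroup φ) : V ≃ₗ[K] V) x
        = ((c : K))⁻¹ • (w : V ≃ₗ[K] V) x := fun x => rfl
    refine ⟨s * w, ?_, ?_⟩
    · intro x y
      rw [hsw x, hsw y]
      simp only [map_smul, LinearMap.smul_apply, smul_eq_mul]
      rw [mu_spec φ w, ← hcmu]
      field_simp
    · rw [QuotientGroup.mk_mul,
        (QuotientGroup.eq_one_iff s).mpr (scalarSim_mem φ _ _), one_mul]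
  have hfinB : ∀ b : B, IsOfFinOrder ((b : B) : projOrthogonalGroup φ) :=
    fun b => B.subtype.isOfFinOrder (isOfFinOrder_of_finite b)
  set A : Subgroup B := Gm.ker with hA
  have hGmF : ∀ b : B, Gm b = F (b : projOrthogonalGroup φ) := fun _ => rfl
  -- squares of B land in A
  have hsqA : ∀ b : B, b ^ 2 ∈ A := by
    intro b
    rw [hA, MonoidHom.mem_ker, map_pow, pow_two]
    exact sq_quot _
  -- commutators of B land in A
  have hqcomm : ∀ z1 z2 : Kˣ ⧸ (powMonoidHom 2 : Kˣ →* Kˣ).range, ⁅z1, z2⁆ = 1 := by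
    intro z1 z2
    induction z1 using QuotientGroup.induction_on with
    | _ a =>
      induction z2 using QuotientGroup.induction_on with
      | _ b =>
        have h1 : ⁅a, b⁆ = 1 := commutatorElement_eq_one_iff_mul_comm.mpr (mul_comm a b)
        have h2 : (⁅(QuotientGroup.mk a : Kˣ ⧸ (powMonoidHom 2 : Kˣ →* Kˣ).range),
            QuotientGroup.mk b⁆) = QuotientGroup.mk ⁅a, b⁆ :=
          (map_commutatorElement (QuotientGroup.mk' _) a b).symm
        rw [h2, h1, QuotientGroup.mk_one]
  have hcommA : ∀ x y : B, ⁅x, y⁆ ∈ A := by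
    intro x y
    rw [hA, MonoidHom.mem_ker, map_commutatorElement]
    exact hqcomm _ _
  -- elements of A square to 1
  have hA2 : ∀ a : B, a ∈ A → a ^ 2 = 1 := by
    intro a ha
    obtain ⟨u, huiso, humk⟩ := hP ((a : B) : projOrthogonalGroup φ) (hfinB a) ha
    have h1 : (u : V ≃ₗ[K] V) * (u : V ≃ₗ[K] V) = 1 :=
      hQ u huiso (by rw [humk]; exact hfinB a)
    have h2 : u * u = 1 := Subtype.ext h1
    have h3 : ((a : B) : projOrthogonalGroup φ) ^ 2 = 1 := by
      rw [← humk, ← QuotientGroup.mk_pow, pow_two, h2, QuotientGroup.mk_one]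
    refine Subtype.ext ?_
    rw [SubmonoidClass.coe_pow, OneMemClass.coe_one]
    exact h3
  -- A is commutative
  have hAcomm : ∀ a ∈ A, ∀ b ∈ A, a * b = b * a := by
    intro a ha b hb
    have hab := hA2 _ (A.mul_mem ha hb)
    have ha2 := hA2 a ha
    have hb2 := hA2 b hb
    rw [pow_two] at hab ha2 hb2
    calc a * b = (a * b)⁻¹ := (inv_eq_of_mul_eq_one_right hab).symm
      _ = b⁻¹ * a⁻¹ := mul_inv_rev a b
      _ = b * a := by
          rw [inv_eq_of_mul_eq_one_right ha2, inv_eq_of_mul_eq_one_right hb2]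
  -- ################ cardinality of A ################
  let π : similitudeSubgroup φ →* projOrthogonalGroup φ := QuotientGroup.mk' (scalarSubgroup φ)
  set A' : Subgroup (projOrthogonalGroup φ) := A.map B.subtype with hA'
  have hcardA : Nat.card A = Nat.card A' :=
    Nat.card_congr (Subgroup.equivMapOfInjective A B.subtype B.subtype_injective).toEquiv
  set Γ : Subgroup (similitudeSubgroup φ) := A'.comap π ⊓ isomSubgroup φ with hΓ
  have hA'fin : ∀ g ∈ A', IsOfFinOrder g := by
    rintro g ⟨b, _, rfl⟩
    exact hfinB b
  have hA'F : ∀ g ∈ A', F g = 1 := by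
    rintro g ⟨b, hb, rfl⟩
    exact hb
  have hπmk : ∀ w : similitudeSubgroup φ, π w = QuotientGroup.mk w := fun _ => rfl
  have hΓsq : ∀ w : similitudeSubgroup φ, w ∈ Γ → w * w = 1 := by
    intro w hw
    obtain ⟨hw1, hw2⟩ := Subgroup.mem_inf.mp hw
    exact Subtype.ext (hQ w hw2 (hA'fin _ hw1))
  -- the image of Γ in PO is exactly A'
  have hrange : Γ.map π = A' := by
    apply le_antisymm
    · rintro g ⟨w, hw, rfl⟩
      exact (Subgroup.mem_inf.mp hw).1
    · intro g hg
      obtain ⟨u, huiso, humk⟩ := hP g (hA'fin g hg) (hA'F g hg)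
      refine ⟨u, Subgroup.mem_inf.mpr ⟨?_, huiso⟩, humk⟩
      show π u ∈ A'
      rw [hπmk, humk]
      exact hg
  let πΓ : Γ →* projOrthogonalGroup φ := π.comp Γ.subtype
  have hrange2 : πΓ.range = A' := by
    rw [← hrange]
    ext g
    constructor
    · rintro ⟨t, rfl⟩
      exact ⟨(t : similitudeSubgroup φ), t.2, rfl⟩
    · rintro ⟨w, hw, rfl⟩
      exact ⟨⟨w, hw⟩, rfl⟩
  -- the minus-one element
  have hm1 : (-1 : K) ≠ 0 := by norm_num
  set ε : similitudeSubgroup φ := scalarSim φ (-1 : K) hm1 with hε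
  have hεiso : ε ∈ isomSubgroup φ := by
    intro x y
    rw [scalarSim_apply, scalarSim_apply]
    simp only [map_smul, LinearMap.smul_apply, smul_eq_mul]
    ring
  have hπε : π ε = 1 := (QuotientGroup.eq_one_iff ε).mpr (scalarSim_mem φ _ _)
  have hεΓ : ε ∈ Γ := Subgroup.mem_inf.mpr ⟨by
      show π ε ∈ A'
      rw [hπε]; exact A'.one_mem, hεiso⟩
  set e : Γ := ⟨ε, hεΓ⟩ with he
  have hεne : e ≠ 1 := by
    intro h
    have h2 := congrArg (fun t => (((t : Γ) : similitudeSubgroup φ) : V ≃ₗ[K] V) v₀) h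
    simp only [he] at h2
    rw [scalarSim_apply] at h2
    have h3 : (-1 : K) • v₀ = v₀ := h2
    rw [neg_smul, one_smul] at h3
    apply hv₀ne
    have h4 : (2 : K) • v₀ = 0 := by
      rw [two_smul]
      nth_rewrite 1 [← h3]
      exact neg_add_cancel v₀
    exact (smul_eq_zero.mp h4).resolve_left two_ne_zero
  have hesq : e * e = 1 := by
    refine Subtype.ext (Subtype.ext (LinearEquiv.ext fun x => ?_))
    show (-1 : K) • ((-1 : K) • x) = x
    rw [smul_smul]
    norm_num
  have hker : πΓ.ker = Subgroup.zpowers e := by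
    apply le_antisymm
    · intro t ht
      have htπ : π (t : similitudeSubgroup φ) = 1 := ht
      have hmem : ((t : Γ) : similitudeSubgroup φ) ∈ scalarSubgroup φ :=
        (QuotientGroup.eq_one_iff _).mp htπ
      obtain ⟨c, hc, hct⟩ := hmem
      have htiso : ((t : Γ) : similitudeSubgroup φ) ∈ isomSubgroup φ :=
        (Subgroup.mem_inf.mp t.2).2
      have hc2 : c * c = 1 := by
        have h1 := htiso v₀ v₀
        rw [hct v₀] at h1
        simp only [map_smul, LinearMap.smul_apply, smul_eq_mul, ← mul_assoc] at h1
        have h2 : c * c * φ v₀ v₀ = 1 * φ v₀ v₀ := by rw [one_mul]; exact h1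
        exact mul_right_cancel₀ hv₀ h2
      rcases mul_self_eq_one_iff.mp hc2 with h | h
      · have : t = 1 := by
          refine Subtype.ext (Subtype.ext (LinearEquiv.ext fun x => ?_))
          rw [hct x, h, one_smul]
          rfl
        rw [this]
        exact Subgroup.one_mem _
      · have : t = e := by
          refine Subtype.ext (Subtype.ext (LinearEquiv.ext fun x => ?_))
          rw [hct x, h]
          rfl
        rw [this]
        exact Subgroup.mem_zpowers e
    · rw [Subgroup.zpowers_le]
      show π ε = 1
      exact hπε
  haveI : Fact (Nat.Prime 2) := ⟨Nat.prime_two⟩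
  have horde : orderOf e = 2 := orderOf_eq_prime (by rw [pow_two]; exact hesq) hεne
  haveI hfinA' : Finite A' := by
    rw [hA']
    have : Finite A := inferInstance
    exact Set.Finite.to_subtype (Set.Finite.image _ (Set.toFinite _))
  haveI hfinker : Finite πΓ.ker := by
    rw [hker]
    exact Set.Finite.to_subtype (finite_zpowers.mpr
      (isOfFinOrder_iff_pow_eq_one.mpr ⟨2, by norm_num, by rw [pow_two]; exact hesq⟩))
  haveI hfinrange : Finite πΓ.range := by rw [hrange2]; exact hfinA'
  haveI hfinquot : Finite (Γ ⧸ πΓ.ker) :=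
    Finite.of_equiv _ (QuotientGroup.quotientKerEquivRange πΓ).toEquiv.symm
  haveI hfinΓ : Finite Γ :=
    Finite.of_equiv _ (Subgroup.groupEquivQuotientProdSubgroup (s := πΓ.ker)).symm
  have hcardΓ : Nat.card Γ = Nat.card A' * 2 := by
    rw [Subgroup.card_eq_card_quotient_mul_card_subgroup πΓ.ker]
    congr 1
    · rw [Nat.card_congr (QuotientGroup.quotientKerEquivRange πΓ).toEquiv, hrange2]
    · rw [hker, Nat.card_zpowers, horde]
  set Γₗ : Subgroup (V ≃ₗ[K] V) := Γ.map (similitudeSubgroup φ).subtype with hΓₗ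
  have hcardΓₗ : Nat.card Γₗ = Nat.card Γ :=
    (Nat.card_congr (Subgroup.equivMapOfInjective Γ _
      (similitudeSubgroup φ).subtype_injective).toEquiv).symm
  haveI hfinΓₗ : Finite Γₗ := by
    rw [hΓₗ]
    exact Set.Finite.to_subtype (Set.Finite.image _ (Set.toFinite _))
  have hΓₗsq : ∀ w ∈ Γₗ, w * w = 1 := by
    rintro w ⟨u, hu, rfl⟩
    have h := hΓsq u hu
    exact congrArg Subtype.val h
  have hdvd : Nat.card Γₗ ∣ 2 ^ d :=
    card_dvd_two_pow_of_invol d V inferInstance inferInstance inferInstance hd.symm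
      Γₗ hfinΓₗ hΓₗsq
  have hcardAdvd : Nat.card A ∣ 2 ^ (d - 1) := by
    have h1 : Nat.card A' * 2 ∣ 2 ^ d := by
      rw [← hcardΓ, ← hcardΓₗ] at *
      exact hdvd
    have h2 : 2 ^ d = 2 ^ (d - 1) * 2 := by
      rw [← pow_succ, Nat.sub_add_cancel hdim]
    rw [h2] at h1
    rw [hcardA]
    exact (Nat.mul_dvd_mul_iff_right (by norm_num : 0 < 2)).mp h1
  -- ################ conclusions ################
  refine ⟨⟨A, MonoidHom.normal_ker Gm, hAcomm, fun a ha => hA2 a ha, hcardAdvd, hcommA, hsqA⟩,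
    ?_, ?_⟩
  · rw [← IsPGroup.iff_card (p := 2)]
    intro b
    refine ⟨2, ?_⟩
    have h22 : (2 : ℕ) ^ 2 = 2 * 2 := by norm_num
    rw [h22, pow_mul]
    exact hA2 _ (hsqA b)
  · have hder1 : derivedSeries B 1 ≤ A := by
      rw [show (1 : ℕ) = 0 + 1 from rfl, derivedSeries_succ, derivedSeries_zero]
      exact Subgroup.commutator_le.mpr fun g _ h _ => hcommA g h
    rw [show (2 : ℕ) = 1 + 1 from rfl, derivedSeries_succ]
    rw [eq_bot_iff]
    refine Subgroup.commutator_le.mpr fun g hg h hh => ?_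
    rw [Subgroup.mem_bot, commutatorElement_eq_one_iff_mul_comm]
    exact hAcomm g (hder1 hg) h (hder1 hh)
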